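/- For every power q of an odd prime, there exists an injective group homomorphism from SL(2,F_3) into SL(2,F_q); that is, SL(2,F_q) has a subgroup isomorphic to SL(2,F_3). -/

import Mathlib

open Quaternion Matrix

abbrev G3 := Matrix.SpecialLinearGroup (Fin 2) (ZMod 3)

instance : DecidableEq G3 :=
  inferInstanceAs (DecidableEq {A : Matrix (Fin 2) (Fin 2) (ZMod 3) // A.det = 1})

instance : DecidableEq (QuaternionAlgebra ℤ (-1) 0 (-1)) := fun p q =>
  decidable_of_iff (p.re = q.re ∧ p.imI = q.imI ∧ p.imJ = q.imJ ∧ p.imK = q.imK)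
    ⟨fun ⟨h1, h2, h3, h4⟩ => QuaternionAlgebra.ext h1 h2 h3 h4,
     fun h => by subst h; exact ⟨rfl, rfl, rfl, rfl⟩⟩

def sig (v : ZMod 3) : ℤ := if v = 0 then 0 else if v = 1 then 1 else -1

def NQ (g : G3) : QuaternionAlgebra ℤ (-1) 0 (-1) :=
  let g00 := g.1 0 0; let g01 := g.1 0 1; let g10 := g.1 1 0; let g11 := g.1 1 1
  let x := 2*(g00+g11); let y := g00-g11+g01+g10; let z := 2*(g10-g01); let w := g00-g11-g01-g10
  if x*y = 0 then ⟨2*sig x, 2*sig y, 2*sig z, 2*sig w⟩ else ⟨-sig x, -sig y, -sig z, -sig w⟩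

set_option maxRecDepth 100000 in
theorem NQ_norm : ∀ g : G3, (NQ g).re^2 + (NQ g).imI^2 + (NQ g).imJ^2 + (NQ g).imK^2 = 4 := by
  decide

set_option maxRecDepth 100000 in
theorem NQ_mul : ∀ g h : G3, NQ g * NQ h = (2:ℤ) • NQ (g * h) := by
  decide

def Pd (d : ℤ) : Prop := d = 1 ∨ d = -1 ∨ d = 2 ∨ d = -2 ∨ d = 4 ∨ d = -4

instance : DecidablePred Pd := fun d => by unfold Pd; infer_instance

set_option maxRecDepth 100000 in
theorem NQ_inj : ∀ g h : G3, g ≠ h → Pd ((NQ g).re - (NQ h).re) ∨ Pd ((NQ g).imI - (NQ h).imI)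
    ∨ Pd ((NQ g).imJ - (NQ h).imJ) ∨ Pd ((NQ g).imK - (NQ h).imK) := by
  decide

section Fside

variable {F : Type*} [Field F]

theorem Pd_cast_ne {d : ℤ} (h2 : (2:F) ≠ 0) (hd : Pd d) : (d : F) ≠ 0 := by
  have h4 : (4:F) ≠ 0 := by
    intro h; apply h2
    have : (2:F) * 2 = 0 := by rw [← h]; norm_num
    rcases mul_eq_zero.mp this with h' | h' <;> exact h'
  rcases hd with rfl | rfl | rfl | rfl | rfl | rfl <;> push_cast <;> simp [h2, h4]

/-- A quaternionic basis of 2×2 matrices. -/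
def quatBasis (a b : F) (hab : a^2 + b^2 = -1) :
    QuaternionAlgebra.Basis (Matrix (Fin 2) (Fin 2) F) (-1 : ℤ) (0 : ℤ) (-1 : ℤ) where
  i := !![a, b; b, -a]
  j := !![0, -1; 1, 0]
  k := !![b, -a; -a, -b]
  i_mul_i := by
    ext i j
    fin_cases i <;> fin_cases j <;>
      simp [Matrix.mul_apply, Fin.sum_univ_two, Matrix.one_apply] <;>
      first | ring1 | linear_combination hab
  j_mul_j := by
    ext i j
    fin_cases i <;> fin_cases j <;>
      simp [Matrix.mul_apply, Fin.sum_univ_two, Matrix.one_apply] <;>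
      first | ring1 | linear_combination hab
  i_mul_j := by
    ext i j
    fin_cases i <;> fin_cases j <;>
      simp [Matrix.mul_apply, Fin.sum_univ_two, Matrix.one_apply] <;>
      first | ring1 | linear_combination hab
  j_mul_i := by
    ext i j
    fin_cases i <;> fin_cases j <;>
      simp [Matrix.mul_apply, Fin.sum_univ_two, Matrix.one_apply] <;>
      first | ring1 | linear_combination hab

@[simp] theorem quatBasis_i (a b : F) (hab : a^2 + b^2 = -1) :
    (quatBasis a b hab).i = !![a, b; b, -a] := rfl
@[simp] theorem quatBasis_j (a b : F) (hab : a^2 + b^2 = -1) :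
    (quatBasis a b hab).j = !![0, -1; 1, 0] := rfl
@[simp] theorem quatBasis_k (a b : F) (hab : a^2 + b^2 = -1) :
    (quatBasis a b hab).k = !![b, -a; -a, -b] := rfl

variable (a b : F) (hab : a^2 + b^2 = -1)

noncomputable def Θ : QuaternionAlgebra ℤ (-1) 0 (-1) →ₐ[ℤ] Matrix (Fin 2) (Fin 2) F :=
  (quatBasis a b hab).liftHom

theorem Θ_apply (q : QuaternionAlgebra ℤ (-1) 0 (-1)) :
    Θ a b hab q = !![(q.re:F) + q.imI*a + q.imK*b, q.imI*b - q.imJ - q.imK*a;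
                    q.imI*b + q.imJ - q.imK*a, (q.re:F) - q.imI*a - q.imK*b] := by
  simp only [Θ, QuaternionAlgebra.Basis.liftHom_apply, QuaternionAlgebra.Basis.lift,
    quatBasis_i, quatBasis_j, quatBasis_k]
  ext i j
  fin_cases i <;> fin_cases j <;>
    simp [Matrix.algebraMap_matrix_apply, zsmul_eq_mul, ← Matrix.diagonal_intCast,
      Matrix.diagonal_apply] <;> ring

theorem Θ_det (q : QuaternionAlgebra ℤ (-1) 0 (-1)) :
    (Θ a b hab q).det = ((q.re^2 + q.imI^2 + q.imJ^2 + q.imK^2 : ℤ) : F) := by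
  rw [Θ_apply, Matrix.det_fin_two_of]
  push_cast
  linear_combination (-((q.imI:F)^2 + (q.imK:F)^2)) * hab

theorem Θ_inj (h2 : (2:F) ≠ 0) {q q' : QuaternionAlgebra ℤ (-1) 0 (-1)}
    (h : Θ a b hab q = Θ a b hab q') :
    ((q.re - q'.re : ℤ) : F) = 0 ∧ ((q.imI - q'.imI : ℤ) : F) = 0 ∧
    ((q.imJ - q'.imJ : ℤ) : F) = 0 ∧ ((q.imK - q'.imK : ℤ) : F) = 0 := by
  have h0 : Θ a b hab (q - q') = 0 := by rw [map_sub, h, sub_self]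
  rw [Θ_apply] at h0
  have e00 := congrFun (congrFun h0 0) 0
  have e01 := congrFun (congrFun h0 0) 1
  have e10 := congrFun (congrFun h0 1) 0
  have e11 := congrFun (congrFun h0 1) 1
  simp [QuaternionAlgebra.re_sub, QuaternionAlgebra.imI_sub, QuaternionAlgebra.imJ_sub,
    QuaternionAlgebra.imK_sub] at e00 e01 e10 e11
  push_cast at e00 e01 e10 e11 ⊢
  set x := (q.re : F) - (q'.re : F)
  set y := (q.imI : F) - (q'.imI : F)
  set z := (q.imJ : F) - (q'.imJ : F)
  set w := (q.imK : F) - (q'.imK : F)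
  have hx : x = 0 := by
    have : x * 2 = 0 := by linear_combination e00 + e11
    rcases mul_eq_zero.mp this with h' | h'
    · exact h'
    · exact absurd h' h2
  have hz : z = 0 := by
    have : z * 2 = 0 := by linear_combination e10 - e01
    rcases mul_eq_zero.mp this with h' | h'
    · exact h'
    · exact absurd h' h2
  have hy : y = 0 := by
    linear_combination (-a) * e00 + (-b) * e01 + y * hab + a * hx + (-b) * hz
  have hw : w = 0 := by
    linear_combination (-b) * e00 + a * e01 + w * hab + b * hx + a * hz
  exact ⟨hx, hy, hz, hw⟩

end Fside

theorem exists_injective_SL2_F3_to_SL2 {F : Type*} [Field F] [Fintype F]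
    (hq : Odd (Fintype.card F)) :
    ∃ f : Matrix.SpecialLinearGroup (Fin 2) (ZMod 3) →*
        Matrix.SpecialLinearGroup (Fin 2) F, Function.Injective f := by
  classical
  have hchar : ringChar F ≠ 2 := by
    intro h
    have h0 := FiniteField.even_card_of_char_two h
    rw [Nat.odd_iff] at hq
    omega
  have h2 : (2 : F) ≠ 0 := by
    intro h
    have hd : ringChar F ∣ 2 := by
      have : ((2 : ℕ) : F) = 0 := by exact_mod_cast h
      exact (CharP.cast_eq_zero_iff F (ringChar F) 2).mp this
    rcases (Nat.prime_two.eq_one_or_self_of_dvd _ hd) with h1 | h1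
    · exact CharP.ringChar_ne_one h1
    · exact hchar h1
  have hp : (ringChar F).Prime := CharP.char_is_prime F (ringChar F)
  haveI : NeZero (ringChar F) := ⟨hp.ne_zero⟩
  obtain ⟨a', b', hab'⟩ := CharP.sq_add_sq F (ringChar F) (-1)
  set a : F := (a' : F)
  set b : F := (b' : F)
  have hab : a ^ 2 + b ^ 2 = -1 := by push_cast at hab' ⊢; exact_mod_cast hab'
  set f₀ : G3 → Matrix (Fin 2) (Fin 2) F := fun g => (2⁻¹ : F) • Θ a b hab (NQ g) with hf₀
  have hdet : ∀ g : G3, (f₀ g).det = 1 := by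
    intro g
    have h4 : ((((NQ g).re^2 + (NQ g).imI^2 + (NQ g).imJ^2 + (NQ g).imK^2 : ℤ)) : F) = 4 := by
      rw [NQ_norm g]; norm_num
    rw [hf₀]
    simp only [Matrix.det_smul, Θ_det, h4, Fintype.card_fin]
    field_simp
    norm_num
  have hmul : ∀ g h : G3, f₀ (g * h) = f₀ g * f₀ h := by
    intro g h
    have hq := congrArg (Θ a b hab) (NQ_mul g h)
    rw [_root_.map_mul, map_zsmul] at hq
    rw [hf₀]
    simp only
    rw [smul_mul_smul, hq]
    rw [← Int.cast_smul_eq_zsmul F, smul_smul]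
    congr 1
    push_cast
    field_simp
  refine ⟨MonoidHom.mk' (fun g => ⟨f₀ g, hdet g⟩) (fun g h => Subtype.ext (hmul g h)), ?_⟩
  intro g h hgh
  by_contra hne
  have hF : f₀ g = f₀ h := congrArg Subtype.val hgh
  have hΘ : Θ a b hab (NQ g) = Θ a b hab (NQ h) :=
    smul_right_injective _ (inv_ne_zero h2) hF
  obtain ⟨c1, c2, c3, c4⟩ := Θ_inj a b hab h2 hΘ
  rcases NQ_inj g h hne with hP | hP | hP | hP
  · exact Pd_cast_ne h2 hP c1
  · exact Pd_cast_ne h2 hP c2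
  · exact Pd_cast_ne h2 hP c3
  · exact Pd_cast_ne h2 hP c4
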